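/- Let α be irrational, and suppose p ∈ ℕ, p > 0, satisfies d([pα], [0]) < ε in ℝ/ℤ for some ε > 0. Then the set { [k p α] : k ∈ ℕ } is ε-dense in ℝ/ℤ: every point of ℝ/ℤ is within distance ε of some [k p α]. -/

import Mathlib

theorem multiples_eps_dense (α : ℝ) (hα : Irrational α) (p : ℕ) (hp : 0 < p)
    (ε : ℝ) (hε : 0 < ε)
    (h : dist (((p * α : ℝ)) : AddCircle (1 : ℝ)) (0 : AddCircle (1 : ℝ)) < ε) :
    ∀ y : AddCircle (1 : ℝ), ∃ k : ℕ,
      dist y (((k * p * α : ℝ)) : AddCircle (1 : ℝ)) ≤ ε := by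
  intro y
  -- the lift of p*α to (-1/2, 1/2]
  set r : ℝ := (p : ℝ) * α - round ((p : ℝ) * α) with hr
  have hirr : Irrational ((p : ℝ) * α) := hα.natCast_mul hp.ne'
  have hr0 : r ≠ 0 := by
    intro h0
    exact hirr.ne_int (round ((p : ℝ) * α)) (by linarith [sub_eq_zero.mp h0])
  have hrε : |r| < ε := by
    have := h
    rwa [dist_eq_norm, sub_zero, AddCircle.norm_eq, inv_one, one_mul, mul_one] at this
  -- lift y
  obtain ⟨x, rfl⟩ := QuotientAddGroup.mk_surjective y
  -- choose t with the same sign as r and |t| < 1, t ≡ x mod 1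
  set t : ℝ := if 0 < r then Int.fract x else Int.fract x - 1 with ht
  have htx : (t : AddCircle (1 : ℝ)) = (x : AddCircle (1 : ℝ)) := by
    have h1 : ((Int.fract x : ℝ) : AddCircle (1 : ℝ)) = (x : AddCircle (1 : ℝ)) := by
      rw [Int.fract]
      push_cast
      rw [sub_eq_add_neg, AddCircle.coe_add, AddCircle.coe_neg]
      have : ((((⌊x⌋ : ℝ)) : AddCircle (1 : ℝ))) = 0 := by
        exact (AddCircle.coe_eq_zero_iff _).mpr ⟨⌊x⌋, by simp⟩
      rw [this, neg_zero, add_zero]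
    rw [ht]
    split_ifs
    · exact h1
    · rw [sub_eq_add_neg, AddCircle.coe_add, AddCircle.coe_neg]
      have : (((1 : ℝ)) : AddCircle (1 : ℝ)) = 0 := by
        exact (AddCircle.coe_eq_zero_iff _).mpr ⟨1, by simp⟩
      rw [this, neg_zero, add_zero, h1]
  have hdiv : 0 ≤ t / r := by
    rcases lt_or_gt_of_ne hr0 with hneg | hpos
    · have htneg : t ≤ 0 := by
        rw [ht, if_neg (not_lt.mpr hneg.le)]
        linarith [Int.fract_lt_one x]
      rw [div_nonneg_iff]; right; exact ⟨htneg, hneg.le⟩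
    · have : 0 ≤ t := by
        rw [ht, if_pos hpos]; exact Int.fract_nonneg x
      exact div_nonneg this hpos.le
  set k : ℕ := ⌊t / r⌋.toNat with hk
  have hkfloor : (k : ℝ) = (⌊t / r⌋ : ℝ) := by
    rw [hk]
    exact_mod_cast congrArg Int.cast (Int.toNat_of_nonneg (Int.le_floor.mpr (by exact_mod_cast hdiv)))
  have hclose : |t - k * r| < ε := by
    have h1 : (k : ℝ) ≤ t / r := by rw [hkfloor]; exact Int.floor_le _
    have h2 : t / r < k + 1 := by rw [hkfloor]; exact Int.lt_floor_add_one _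
    have habs : |t / r - k| < 1 := abs_lt.mpr ⟨by linarith, by linarith⟩
    have : t - k * r = (t / r - k) * r := by field_simp
    calc |t - k * r| = |t / r - k| * |r| := by rw [this, abs_mul]
      _ ≤ 1 * |r| := mul_le_mul_of_nonneg_right habs.le (abs_nonneg r)
      _ < ε := by rwa [one_mul]
  -- identify (k*p*α) with (k*r) in the circle
  have hcirc : (((k : ℝ) * p * α : ℝ) : AddCircle (1 : ℝ)) = (((k : ℝ) * r : ℝ) : AddCircle (1 : ℝ)) := by
    have h0 : ((((k : ℝ) * p * α - (k : ℝ) * r) : ℝ) : AddCircle (1 : ℝ)) = 0 :=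
      (AddCircle.coe_eq_zero_iff _).mpr
        ⟨(k : ℤ) * round ((p : ℝ) * α), by rw [zsmul_eq_mul, mul_one, hr]; push_cast; ring⟩
    rw [AddCircle.coe_sub] at h0
    exact sub_eq_zero.mp h0
  refine ⟨k, ?_⟩
  rw [← htx, hcirc, dist_eq_norm, ← AddCircle.coe_sub]
  calc ‖((t - (k : ℝ) * r : ℝ) : AddCircle (1 : ℝ))‖ ≤ ‖(t - (k : ℝ) * r : ℝ)‖ :=
        QuotientAddGroup.norm_mk_le_norm
    _ = |t - k * r| := Real.norm_eq_abs _
    _ ≤ ε := hclose.le
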